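/- Every positive rational number q appears in some Stern–Brocot sequence F_m; that is, there exist m and an entry a/b of F_m with b > 0 and q = a/b. -/

import Mathlib

/-- One step of mediant insertion: between every two consecutive entries `(a,b)`, `(c,d)`
(representing `a/b`, `c/d`), insert the mediant `(a+c, b+d)`. -/
def sbStep : List (ℕ × ℕ) → List (ℕ × ℕ)
  | [] => []
  | [x] => [x]
  | x :: y :: rest => x :: (x.1 + y.1, x.2 + y.2) :: sbStep (y :: rest)

/-- The Stern–Brocot (Farey) sequences: `F₀ = [0/1, 1/0]` and `F_{m+1}` is obtained from
`F_m` by mediant insertion. -/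
def sbSeq : ℕ → List (ℕ × ℕ)
  | 0 => [(0, 1), (1, 0)]
  | m + 1 => sbStep (sbSeq m)

lemma mem_sbStep {x : ℕ × ℕ} : ∀ L : List (ℕ × ℕ), x ∈ L → x ∈ sbStep L
  | [] => by simp [sbStep]
  | [y] => by simp [sbStep]
  | y :: z :: rest => by
    intro h
    simp only [List.mem_cons] at h
    simp only [sbStep, List.mem_cons]
    rcases h with h | h | h
    · exact Or.inl h
    · subst h
      exact Or.inr (Or.inr (mem_sbStep _ List.mem_cons_self))
    · exact Or.inr (Or.inr (mem_sbStep (z :: rest) (List.mem_cons_of_mem _ h)))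

lemma sbStep_cons (y : ℕ × ℕ) (L : List (ℕ × ℕ)) : ∃ t, sbStep (y :: L) = y :: t := by
  cases L with
  | nil => exact ⟨[], rfl⟩
  | cons z rest => exact ⟨_, rfl⟩

lemma sbStep_split : ∀ (l1 : List (ℕ × ℕ)) (x y : ℕ × ℕ) (l2 L : List (ℕ × ℕ)),
    L = l1 ++ x :: y :: l2 →
    ∃ l1' l2', sbStep L = l1' ++ x :: (x.1 + y.1, x.2 + y.2) :: y :: l2'
  | [], x, y, l2, L => by
    rintro rfl
    obtain ⟨t, ht⟩ := sbStep_cons y l2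
    exact ⟨[], t, by simp [sbStep, ht]⟩
  | a :: l1, x, y, l2, L => by
    rintro rfl
    have hne : l1 ++ x :: y :: l2 ≠ [] := by simp
    obtain ⟨b, rest, hb⟩ := List.exists_cons_of_ne_nil hne
    obtain ⟨l1', l2', h⟩ := sbStep_split l1 x y l2 (b :: rest) hb.symm
    refine ⟨a :: (a.1 + b.1, a.2 + b.2) :: l1', l2', ?_⟩
    simp only [List.cons_append, hb, sbStep, h]

/-- Adjacency in some Farey sequence. -/
def Adj (m : ℕ) (a b c d : ℕ) : Prop :=
  ∃ l1 l2, sbSeq m = l1 ++ (a, b) :: (c, d) :: l2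

lemma adj_left {m a b c d : ℕ} (h : Adj m a b c d) : Adj (m + 1) a b (a + c) (b + d) := by
  obtain ⟨l1, l2, h⟩ := h
  obtain ⟨l1', l2', h'⟩ := sbStep_split l1 (a, b) (c, d) l2 _ h
  exact ⟨l1', (c, d) :: l2', by simpa [sbSeq] using h'⟩

lemma adj_right {m a b c d : ℕ} (h : Adj m a b c d) : Adj (m + 1) (a + c) (b + d) c d := by
  obtain ⟨l1, l2, h⟩ := h
  obtain ⟨l1', l2', h'⟩ := sbStep_split l1 (a, b) (c, d) l2 _ h
  exact ⟨l1' ++ [(a, b)], l2', by simpa [sbSeq] using h'⟩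

lemma mediant_mem {m a b c d : ℕ} (h : Adj m a b c d) : (a + c, b + d) ∈ sbSeq (m + 1) := by
  obtain ⟨l1, l2, h⟩ := adj_left h
  rw [h]
  simp

lemma key : ∀ n k l a b c d m, Adj m a b c d → b * c = a * d + 1 → k + l = n →
    1 ≤ k → 1 ≤ l →
    ∃ (m' : ℕ) (p : ℕ × ℕ), p ∈ sbSeq m' ∧ 0 < p.2 ∧
      p.1 * (l * d + k * b) = p.2 * (l * c + k * a) := by
  intro n
  induction n using Nat.strong_induction_on with
  | _ n ih =>
    intro k l a b c d m hadj hdet hn hk hl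
    have hb : 0 < b := by
      rcases Nat.eq_zero_or_pos b with h | h
      · simp [h] at hdet
      · exact h
    rcases lt_trichotomy k l with hkl | hkl | hkl
    · -- l > k : recurse right
      obtain ⟨t, rfl⟩ : ∃ t, l = k + t := ⟨l - k, by omega⟩
      have ht : 1 ≤ t := by omega
      have hdet' : (b + d) * c = (a + c) * d + 1 := by
        rw [Nat.add_mul, hdet]; ring
      obtain ⟨m', p, hp, hp2, heq⟩ := ih (k + t) (by omega) k t (a + c) (b + d) c d (m + 1)
        (adj_right hadj) hdet' rfl hk ht
      refine ⟨m', p, hp, hp2, ?_⟩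
      calc p.1 * ((k + t) * d + k * b) = p.1 * (t * d + k * (b + d)) := by ring_nf
        _ = p.2 * (t * c + k * (a + c)) := heq
        _ = p.2 * ((k + t) * c + k * a) := by ring_nf
    · -- k = l : the mediant works
      subst hkl
      refine ⟨m + 1, (a + c, b + d), mediant_mem hadj, by simp; omega, ?_⟩
      simp only
      ring
    · -- k > l : recurse left
      obtain ⟨t, rfl⟩ : ∃ t, k = l + t := ⟨k - l, by omega⟩
      have ht : 1 ≤ t := by omega
      have hdet' : b * (a + c) = a * (b + d) + 1 := by
        rw [Nat.mul_add, hdet]; ring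
      obtain ⟨m', p, hp, hp2, heq⟩ := ih (l + t) (by omega) t l a b (a + c) (b + d) (m + 1)
        (adj_left hadj) hdet' (by omega) ht hl
      refine ⟨m', p, hp, hp2, ?_⟩
      calc p.1 * (l * d + (l + t) * b) = p.1 * (l * (b + d) + t * b) := by ring_nf
        _ = p.2 * (l * (a + c) + t * a) := heq
        _ = p.2 * (l * c + (l + t) * a) := by ring_nf

theorem statement9 (q : ℚ) (hq : 0 < q) :
    ∃ (m : ℕ) (p : ℕ × ℕ), p ∈ sbSeq m ∧ 0 < p.2 ∧ q = (p.1 : ℚ) / (p.2 : ℚ) := by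
  set p := q.num.toNat with hp
  set s := q.den with hs
  have hpnum : (q.num : ℤ) = (p : ℤ) := by
    simp [hp, Int.toNat_of_nonneg (le_of_lt (Rat.num_pos.mpr hq))]
  have hp1 : 1 ≤ p := by
    have := Rat.num_pos.mpr hq
    omega
  have hs1 : 1 ≤ s := q.pos
  have hadj0 : Adj 0 0 1 1 0 := ⟨[], [], rfl⟩
  obtain ⟨m', P, hP, hP2, heq⟩ := key (s + p) s p 0 1 1 0 0 hadj0 (by norm_num) rfl hs1 hp1
  refine ⟨m', P, hP, hP2, ?_⟩
  have heq' : P.1 * s = P.2 * p := by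
    have := heq
    simpa using this
  have hq' : q = (p : ℚ) / (s : ℚ) := by
    rw [← Rat.num_div_den q]
    congr 1
    · exact_mod_cast hpnum
  rw [hq']
  have hsQ : (0:ℚ) < s := by exact_mod_cast hs1
  have hPQ : (0:ℚ) < (P.2 : ℚ) := by exact_mod_cast hP2
  rw [div_eq_div_iff hsQ.ne' hPQ.ne']
  have : (P.1 : ℚ) * s = P.2 * p := by exact_mod_cast heq'
  linarith
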